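/- arXiv:1904.05500 — 6 statements merged into one kernel-verified Lean document; each statement's English description precedes it below -/
import Mathlib

section
/- If C is a uniquely-Wilf permutation class containing both 12 and 21, then for each k, C contains the increasing permutation 12⋯k if and only if it contains the decreasing permutation k(k−1)⋯1. -/
abbrev PermS : Type := Σ n : ℕ, Equiv.Perm (Fin n)

def Contains (π σ : PermS) : Prop :=
  ∃ f : Fin π.1 ↪o Fin σ.1, ∀ i j : Fin π.1, π.2 i < π.2 j ↔ σ.2 (f i) < σ.2 (f j)

def IsPermClass (C : Set PermS) : Prop :=
  ∀ π σ : PermS, σ ∈ C → Contains π σ → π ∈ C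

noncomputable def avCount (C : Set PermS) (π : PermS) (n : ℕ) : ℕ :=
  {σ : PermS | σ ∈ C ∧ σ.1 = n ∧ ¬ Contains π σ}.ncard

noncomputable def invCount (C : Set PermS) (π : PermS) (n : ℕ) : ℕ :=
  {σ : PermS | σ ∈ C ∧ σ.1 = n ∧ Contains π σ}.ncard

def WilfEquivRel (C : Set PermS) (π σ : PermS) : Prop :=
  ∀ n : ℕ, avCount C π n = avCount C σ n

def UniquelyWilf (C : Set PermS) : Prop :=
  ∀ π σ : PermS, π ∈ C → σ ∈ C → π.1 = σ.1 → WilfEquivRel C π σ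

def KNBalanced (C : Set PermS) (k n : ℕ) : Prop :=
  ∀ π σ : PermS, π ∈ C → σ ∈ C → π.1 = k → σ.1 = k → invCount C π n = invCount C σ n

def Av (X : Set PermS) : Set PermS := {σ | ∀ π ∈ X, ¬ Contains π σ}

def idPerm (k : ℕ) : PermS := ⟨k, 1⟩
def revPermS (k : ℕ) : PermS := ⟨k, Fin.revPerm⟩

def p132 : PermS := ⟨3, Equiv.mk ![0,2,1] ![0,2,1] (by decide) (by decide)⟩
def p213 : PermS := ⟨3, Equiv.mk ![1,0,2] ![1,0,2] (by decide) (by decide)⟩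
def p231 : PermS := ⟨3, Equiv.mk ![1,2,0] ![2,0,1] (by decide) (by decide)⟩
def p312 : PermS := ⟨3, Equiv.mk ![2,0,1] ![1,2,0] (by decide) (by decide)⟩

def emb2 {k : ℕ} (a b : Fin k) (hab : a < b) : Fin 2 ↪o Fin k :=
  OrderEmbedding.ofStrictMono (fun i => if i = 0 then a else b) (by
    intro i j hij
    fin_cases i <;> fin_cases j <;> simp_all)

lemma contains12_iff {k : ℕ} (σ : Equiv.Perm (Fin k)) :
    Contains (idPerm 2) ⟨k, σ⟩ ↔ ∃ a b : Fin k, a < b ∧ σ a < σ b := by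
  show (∃ f : Fin 2 ↪o Fin k, ∀ i j : Fin 2,
      (1 : Equiv.Perm (Fin 2)) i < (1 : Equiv.Perm (Fin 2)) j ↔ σ (f i) < σ (f j)) ↔ _
  constructor
  · rintro ⟨f, hf⟩
    exact ⟨f 0, f 1, f.strictMono (by decide), (hf 0 1).1 (by decide)⟩
  · rintro ⟨a, b, hab, hσ⟩
    refine ⟨emb2 a b hab, ?_⟩
    intro i j
    fin_cases i <;> fin_cases j <;>
      simp [emb2, OrderEmbedding.ofStrictMono, hσ, hab.not_gt, hσ.not_gt, lt_irrefl]

lemma contains21_iff {k : ℕ} (σ : Equiv.Perm (Fin k)) :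
    Contains (revPermS 2) ⟨k, σ⟩ ↔ ∃ a b : Fin k, a < b ∧ σ b < σ a := by
  show (∃ f : Fin 2 ↪o Fin k, ∀ i j : Fin 2,
      Fin.revPerm i < Fin.revPerm j ↔ σ (f i) < σ (f j)) ↔ _
  constructor
  · rintro ⟨f, hf⟩
    exact ⟨f 0, f 1, f.strictMono (by decide), (hf 1 0).1 (by decide)⟩
  · rintro ⟨a, b, hab, hσ⟩
    refine ⟨emb2 a b hab, ?_⟩
    intro i j
    fin_cases i <;> fin_cases j <;>
      simp [emb2, OrderEmbedding.ofStrictMono, hσ, hσ.not_gt, lt_irrefl] <;> decide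

open scoped Classical

lemma strictMono_perm_eq_one {k : ℕ} (σ : Equiv.Perm (Fin k)) (h : StrictMono σ) : σ = 1 := by
  have h2 : ⇑σ = (id : Fin k → Fin k) := by
    have hr : Set.range ⇑σ = Set.range (id : Fin k → Fin k) := by
      rw [σ.surjective.range_eq, Set.range_id]
    haveI : WellFoundedLT (Fin k) := inferInstance
    exact (StrictMono.range_inj (β := Fin k) (γ := Fin k) h (strictMono_id (α := Fin k))).1 hr
  ext i
  exact congrArg Fin.val (congrFun h2 i)

lemma avoids21_iff {k : ℕ} (σ : Equiv.Perm (Fin k)) :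
    ¬ Contains (revPermS 2) ⟨k, σ⟩ ↔ σ = 1 := by
  rw [contains21_iff]
  push_neg
  constructor
  · intro h
    refine strictMono_perm_eq_one σ ?_
    intro a b hab
    rcases lt_or_eq_of_le (h a b hab) with h' | h'
    · exact h'
    · exact absurd (σ.injective h'.symm) (ne_of_gt hab)
  · rintro rfl a b hab
    simpa using hab.le

lemma avoids12_iff {k : ℕ} (σ : Equiv.Perm (Fin k)) :
    ¬ Contains (idPerm 2) ⟨k, σ⟩ ↔ σ = Fin.revPerm := by
  rw [contains12_iff]
  push_neg
  constructor
  · intro h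
    have hm : StrictMono (Fin.revPerm * σ : Equiv.Perm (Fin k)) := by
      intro a b hab
      have h1 : σ b ≤ σ a := h a b hab
      have h2 : σ b ≠ σ a := fun he => (ne_of_gt hab) (σ.injective he)
      have : σ b < σ a := lt_of_le_of_ne h1 h2
      simpa [Equiv.Perm.mul_apply, Fin.revPerm_apply, Fin.rev_lt_rev] using this
    have := strictMono_perm_eq_one _ hm
    have : σ = Fin.revPerm⁻¹ * 1 := by rw [← this]; group
    simpa [Equiv.Perm.inv_def, Fin.revPerm_symm] using this
  · rintro rfl a b hab
    simpa [Fin.rev_le_rev] using hab.le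

lemma avCount21 (C : Set PermS) (k : ℕ) :
    avCount C (revPermS 2) k = if idPerm k ∈ C then 1 else 0 := by
  have hset : {σ : PermS | σ ∈ C ∧ σ.1 = k ∧ ¬ Contains (revPermS 2) σ}
      = if idPerm k ∈ C then {idPerm k} else (∅ : Set PermS) := by
    ext ⟨n, τ⟩
    constructor
    · rintro ⟨hc, hn, hav⟩
      dsimp at hn; subst hn
      have : τ = 1 := (avoids21_iff τ).1 hav
      subst this
      rw [if_pos (show idPerm _ ∈ C from hc)]
      rfl
    · intro hmem
      split_ifs at hmem with hid
      · rw [Set.mem_singleton_iff] at hmem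
        rw [hmem]
        exact ⟨hid, rfl, (avoids21_iff 1).2 rfl⟩
      · exact absurd hmem (Set.notMem_empty _)
  rw [avCount, hset]
  split_ifs <;> simp

lemma avCount12 (C : Set PermS) (k : ℕ) :
    avCount C (idPerm 2) k = if revPermS k ∈ C then 1 else 0 := by
  have hset : {σ : PermS | σ ∈ C ∧ σ.1 = k ∧ ¬ Contains (idPerm 2) σ}
      = if revPermS k ∈ C then {revPermS k} else (∅ : Set PermS) := by
    ext ⟨n, τ⟩
    constructor
    · rintro ⟨hc, hn, hav⟩
      dsimp at hn; subst hn
      have : τ = Fin.revPerm := (avoids12_iff τ).1 hav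
      subst this
      rw [if_pos (show revPermS _ ∈ C from hc)]
      rfl
    · intro hmem
      split_ifs at hmem with hid
      · rw [Set.mem_singleton_iff] at hmem
        rw [hmem]
        exact ⟨hid, rfl, (avoids12_iff Fin.revPerm).2 rfl⟩
      · exact absurd hmem (Set.notMem_empty _)
  rw [avCount, hset]
  split_ifs <;> simp

theorem stmt3 (C : Set PermS) (hC : IsPermClass C) (hW : UniquelyWilf C)
    (h12 : idPerm 2 ∈ C) (h21 : revPermS 2 ∈ C) :
    ∀ k : ℕ, (idPerm k ∈ C ↔ revPermS k ∈ C) := by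
  intro k
  have h := hW (idPerm 2) (revPermS 2) h12 h21 rfl k
  rw [avCount12, avCount21] at h
  by_cases h1 : revPermS k ∈ C <;> by_cases h2 : idPerm k ∈ C <;> simp_all
end

section
/- Every non-monotone permutation of size at least 4 contains a non-monotone permutation of size 3 as a pattern. -/
def IsMonotonePerm (p : PermS) : Prop := StrictMono p.2 ∨ StrictAnti p.2

lemma tripleContains {n : ℕ} (σ : Equiv.Perm (Fin n)) (τ : Equiv.Perm (Fin 3))
    (i0 i1 i2 : Fin n) (h01 : i0 < i1) (h12 : i1 < i2)
    (H01 : τ 0 < τ 1 ↔ σ i0 < σ i1) (H02 : τ 0 < τ 2 ↔ σ i0 < σ i2)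
    (H12 : τ 1 < τ 2 ↔ σ i1 < σ i2) (H10 : τ 1 < τ 0 ↔ σ i1 < σ i0)
    (H20 : τ 2 < τ 0 ↔ σ i2 < σ i0) (H21 : τ 2 < τ 1 ↔ σ i2 < σ i1) :
    Contains ⟨3, τ⟩ ⟨n, σ⟩ := by
  have hsm : StrictMono (![i0, i1, i2] : Fin 3 → Fin n) := by
    intro a b hab
    fin_cases a <;> fin_cases b <;> simp_all <;>
      first | exact h01 | exact h12 | exact h01.trans h12
  refine ⟨OrderEmbedding.ofStrictMono _ hsm, ?_⟩
  intro a b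
  fin_cases a <;> fin_cases b <;> simp <;>
    first | exact H01 | exact H02 | exact H12 | exact H10 | exact H20 | exact H21

theorem stmt10 (n : ℕ) (hn : 4 ≤ n) (σ : Equiv.Perm (Fin n))
    (h : ¬ IsMonotonePerm ⟨n, σ⟩) :
    ∃ τ : Equiv.Perm (Fin 3), ¬ IsMonotonePerm ⟨3, τ⟩ ∧ Contains ⟨3, τ⟩ ⟨n, σ⟩ := by
  have hinj := σ.injective
  have hne : ∀ (a b : Fin n), a.1 ≠ b.1 → σ a ≠ σ b := by
    intro a b hab he
    exact hab (congrArg Fin.val (hinj he))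
  by_cases hex : ∃ k, ∃ hk : k + 2 < n,
      (σ ⟨k, by omega⟩ < σ ⟨k+1, by omega⟩ ∧ σ ⟨k+2, hk⟩ < σ ⟨k+1, by omega⟩)
    ∨ (σ ⟨k+1, by omega⟩ < σ ⟨k, by omega⟩ ∧ σ ⟨k+1, by omega⟩ < σ ⟨k+2, hk⟩)
  · obtain ⟨k, hk, hcase⟩ := hex
    set i0 : Fin n := ⟨k, by omega⟩ with hi0
    set i1 : Fin n := ⟨k+1, by omega⟩ with hi1
    set i2 : Fin n := ⟨k+2, hk⟩ with hi2
    have h01 : i0 < i1 := by simp [hi0, hi1, Fin.lt_def]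
    have h12 : i1 < i2 := by simp [hi1, hi2, Fin.lt_def]
    have hne02 : σ i0 ≠ σ i2 := hne _ _ (by simp [hi0, hi2])
    rcases hcase with ⟨ha, hb⟩ | ⟨ha, hb⟩
    · rcases lt_or_gt_of_ne hne02 with hc | hc
      · refine ⟨p132.2, by unfold IsMonotonePerm; decide,
          tripleContains σ _ i0 i1 i2 h01 h12 ?_ ?_ ?_ ?_ ?_ ?_⟩ <;>
          first
          | exact iff_of_true (by decide) (by omega)
          | exact iff_of_false (by decide) (by omega)
      · refine ⟨p231.2, by unfold IsMonotonePerm; decide,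
          tripleContains σ _ i0 i1 i2 h01 h12 ?_ ?_ ?_ ?_ ?_ ?_⟩ <;>
          first
          | exact iff_of_true (by decide) (by omega)
          | exact iff_of_false (by decide) (by omega)
    · rcases lt_or_gt_of_ne hne02 with hc | hc
      · refine ⟨p213.2, by unfold IsMonotonePerm; decide,
          tripleContains σ _ i0 i1 i2 h01 h12 ?_ ?_ ?_ ?_ ?_ ?_⟩ <;>
          first
          | exact iff_of_true (by decide) (by omega)
          | exact iff_of_false (by decide) (by omega)
      · refine ⟨p312.2, by unfold IsMonotonePerm; decide,
          tripleContains σ _ i0 i1 i2 h01 h12 ?_ ?_ ?_ ?_ ?_ ?_⟩ <;>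
          first
          | exact iff_of_true (by decide) (by omega)
          | exact iff_of_false (by decide) (by omega)
  · exfalso
    have step : ∀ k (hk : k + 2 < n),
        (σ ⟨k, by omega⟩ < σ ⟨k+1, by omega⟩ ↔ σ ⟨k+1, by omega⟩ < σ ⟨k+2, hk⟩) := by
      intro k hk
      constructor
      · intro h1
        by_contra h2
        exact hex ⟨k, hk, Or.inl ⟨h1, lt_of_le_of_ne (not_lt.1 h2) (hne _ _ (by simp))⟩⟩
      · intro h2
        by_contra h1
        exact hex ⟨k, hk, Or.inr ⟨lt_of_le_of_ne (not_lt.1 h1) (hne _ _ (by simp)), h2⟩⟩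
    have all : ∀ k (hk : k + 1 < n),
        (σ ⟨0, by omega⟩ < σ ⟨1, by omega⟩ ↔ σ ⟨k, by omega⟩ < σ ⟨k+1, hk⟩) := by
      intro k
      induction k with
      | zero => intro hk; exact Iff.rfl
      | succ m ih => intro hk; exact (ih (by omega)).trans (step m hk)
    obtain ⟨m, rfl⟩ : ∃ m, n = m + 1 := ⟨n - 1, by omega⟩
    apply h
    by_cases h01 : σ ⟨0, by omega⟩ < σ ⟨1, by omega⟩
    · left
      rw [Fin.strictMono_iff_lt_succ]
      intro i
      exact (all i.1 (Nat.succ_lt_succ i.isLt)).1 h01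
    · right
      rw [Fin.strictAnti_iff_succ_lt]
      intro i
      have := (all i.1 (Nat.succ_lt_succ i.isLt)).not.1 h01
      exact lt_of_le_of_ne (not_lt.1 this) (hne _ _ (by simp))
end

section
/- The class Av(213, 312) of permutations of size n is in bijection with binary words of length n−1 over the alphabet {L, R}, and under this bijection pattern containment in the class coincides with the (scattered) subsequence order on words. -/
/-- The class Av(213, 312). -/
def Av2 : Set PermS := Av {p213, p312}

namespace Wedge15

open List Finset Equiv

/-- letter of value `v` (`v = length` i.e. the max is treated as `false`). -/
def lw (w : List Bool) (v : ℕ) : Bool := w.getD v false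

def cF (w : List Bool) (v : ℕ) : ℕ := ((Finset.range v).filter (fun i => lw w i = false)).card
def cT (w : List Bool) (v : ℕ) : ℕ := ((Finset.range v).filter (fun i => lw w i = true)).card

lemma cF_le (w : List Bool) (v : ℕ) : cF w v ≤ v :=
  le_trans (Finset.card_filter_le _ _) (by simp)

lemma cT_le (w : List Bool) (v : ℕ) : cT w v ≤ v :=
  le_trans (Finset.card_filter_le _ _) (by simp)

lemma cFT (w : List Bool) (v : ℕ) : cF w v + cT w v = v := by
  have h2 : Finset.filter (fun i => ¬ (lw w i = false)) (Finset.range v)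
      = Finset.filter (fun i => lw w i = true) (Finset.range v) := by
    apply Finset.filter_congr; intro i _; simp
  simpa [cF, cT, h2] using
    Finset.card_filter_add_card_filter_not (s := Finset.range v)
      (p := fun i => lw w i = false)

lemma cF_mono (w : List Bool) {a b : ℕ} (h : a ≤ b) : cF w a ≤ cF w b :=
  Finset.card_le_card (Finset.filter_subset_filter _ (Finset.range_subset_range.2 h))

lemma cT_mono (w : List Bool) {a b : ℕ} (h : a ≤ b) : cT w a ≤ cT w b :=
  Finset.card_le_card (Finset.filter_subset_filter _ (Finset.range_subset_range.2 h))

lemma cF_strict (w : List Bool) {a b : ℕ} (h : a < b) (ha : lw w a = false) :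
    cF w a < cF w b := by
  apply Finset.card_lt_card
  rw [Finset.ssubset_iff_of_subset (Finset.filter_subset_filter _ (Finset.range_subset_range.2 h.le))]
  exact ⟨a, Finset.mem_filter.2 ⟨Finset.mem_range.2 h, ha⟩,
    fun hmem => lt_irrefl a (Finset.mem_range.1 (Finset.mem_filter.1 hmem).1)⟩

lemma cT_strict (w : List Bool) {a b : ℕ} (h : a < b) (ha : lw w a = true) :
    cT w a < cT w b := by
  apply Finset.card_lt_card
  rw [Finset.ssubset_iff_of_subset (Finset.filter_subset_filter _ (Finset.range_subset_range.2 h.le))]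
  exact ⟨a, Finset.mem_filter.2 ⟨Finset.mem_range.2 h, ha⟩,
    fun hmem => lt_irrefl a (Finset.mem_range.1 (Finset.mem_filter.1 hmem).1)⟩

lemma lw_true_lt {w : List Bool} {v : ℕ} (h : lw w v = true) : v < w.length := by
  by_contra hc
  rw [lw, List.getD_eq_default _ _ (not_lt.1 hc)] at h
  exact Bool.false_ne_true h

def posn (w : List Bool) (v : Fin (w.length+1)) : Fin (w.length+1) :=
  if lw w v = true then ⟨w.length - cT w v, by omega⟩
  else ⟨cF w v, by have h1 := cF_le w (v : ℕ); have h2 := v.isLt; omega⟩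

def Rel (w : List Bool) (a b : Fin (w.length+1)) : Prop :=
  if lw w a = true then (lw w b = true ∧ b < a) else (lw w b = true ∨ a < b)

lemma posn_lt {w : List Bool} {a b : Fin (w.length+1)} (h : Rel w a b) :
    posn w a < posn w b := by
  unfold Rel at h
  unfold posn
  cases ha : lw w (a : ℕ) <;> cases hb : lw w (b : ℕ) <;> simp [ha, hb] at h ⊢
  · -- F F : h : a < b
    exact cF_strict w h ha
  · -- F T
    have h1 := cF_mono w (Fin.is_le a)
    have h2 := cT_strict w (lw_true_lt hb) hb
    have h3 := cFT w w.length
    omega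
  · -- T T : h : b < a
    have h1 := cT_strict w (show (b:ℕ) < (a:ℕ) from h) hb
    have h2 := cT_le w (a : ℕ)
    have h3 := Fin.is_le a
    omega

lemma Rel_total {w : List Bool} {a b : Fin (w.length+1)} (h : a ≠ b) :
    Rel w a b ∨ Rel w b a := by
  have htri : a < b ∨ b < a := h.lt_or_gt
  unfold Rel
  cases hla : lw w (a : ℕ) <;> cases hlb : lw w (b : ℕ) <;> simp [hla, hlb] <;> tauto

lemma posn_iff {w : List Bool} {a b : Fin (w.length+1)} (h : a ≠ b) :
    posn w a < posn w b ↔ Rel w a b :=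
  ⟨fun hp => (Rel_total h).resolve_right (fun hr => lt_asymm hp (posn_lt hr)), posn_lt⟩

lemma posn_inj (w : List Bool) : Function.Injective (posn w) := by
  intro a b hp
  by_contra hne
  rcases Rel_total hne with r | r
  · exact absurd hp (ne_of_lt (posn_lt r))
  · exact absurd hp.symm (ne_of_lt (posn_lt r))

noncomputable def permw (w : List Bool) : Equiv.Perm (Fin (w.length+1)) :=
  (Equiv.ofBijective _ (Finite.injective_iff_bijective.1 (posn_inj w))).symm

lemma permw_symm (w : List Bool) (v : Fin (w.length+1)) : (permw w).symm v = posn w v := rfl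

lemma lemA {w : List Bool} {a b : Fin (w.length+1)} (h : Rel w a b) (hba : b < a) :
    lw w b = true := by
  unfold Rel at h
  split_ifs at h with h1
  · exact h.1
  · exact h.resolve_right (lt_asymm hba)

lemma lemB {w : List Bool} {a b : Fin (w.length+1)} (h : Rel w a b) (ha : lw w a = true) :
    b < a := by
  unfold Rel at h
  rw [if_pos ha] at h
  exact h.2

lemma Rel_map {u w : List Bool} {g : Fin (u.length+1) → Fin (w.length+1)}
    (hg : StrictMono g) (hl : ∀ v : Fin (u.length+1), lw w (g v) = lw u v)
    (a b : Fin (u.length+1)) : Rel u a b ↔ Rel w (g a) (g b) := by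
  unfold Rel
  rw [hl a, hl b, hg.lt_iff_lt, hg.lt_iff_lt]

end Wedge15

namespace Wedge15
open List Finset Equiv

lemma valley_aux (w : List Bool) (f : Fin 3 ↪o Fin (w.length+1))
    (h10 : permw w (f 1) < permw w (f 0)) (h12 : permw w (f 1) < permw w (f 2)) : False := by
  have hp : ∀ i, posn w (permw w (f i)) = f i := fun i => by
    rw [← permw_symm]; exact (permw w).symm_apply_apply _
  have r01 : Rel w (permw w (f 0)) (permw w (f 1)) :=
    (posn_iff (ne_of_gt h10)).1 (by rw [hp, hp]; exact f.strictMono (by decide))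
  have r12 : Rel w (permw w (f 1)) (permw w (f 2)) :=
    (posn_iff (ne_of_lt h12)).1 (by rw [hp, hp]; exact f.strictMono (by decide))
  exact lt_asymm h12 (lemB r12 (lemA r01 h10))

lemma memAv2 (w : List Bool) : (⟨w.length+1, permw w⟩ : PermS) ∈ Av2 := by
  intro ρ hρ hcont
  simp only [Set.mem_insert_iff, Set.mem_singleton_iff] at hρ
  rcases hρ with rfl | rfl
  · obtain ⟨f, hf⟩ : ∃ f : Fin 3 ↪o Fin (w.length+1),
        ∀ i j : Fin 3, p213.2 i < p213.2 j ↔ permw w (f i) < permw w (f j) := hcont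
    exact valley_aux w f ((hf 1 0).1 (by decide)) ((hf 1 2).1 (by decide))
  · obtain ⟨f, hf⟩ : ∃ f : Fin 3 ↪o Fin (w.length+1),
        ∀ i j : Fin 3, p312.2 i < p312.2 j ↔ permw w (f i) < permw w (f j) := hcont
    exact valley_aux w f ((hf 1 0).1 (by decide)) ((hf 1 2).1 (by decide))

lemma mk3 {N : ℕ} (p1 p2 p3 : Fin N) (h12 : p1 < p2) (h23 : p2 < p3) :
    ∃ f : Fin 3 ↪o Fin N, f 0 = p1 ∧ f 1 = p2 ∧ f 2 = p3 := by
  have hmono : StrictMono ![p1, p2, p3] := by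
    intro i j hij
    fin_cases i <;> fin_cases j <;>
      first
        | exact absurd hij (by decide)
        | simpa using h12
        | simpa using h23
        | simpa using h12.trans h23
  exact ⟨OrderEmbedding.ofStrictMono _ hmono, rfl, rfl, rfl⟩

lemma fin3_all {P : Fin 3 → Fin 3 → Prop}
    (h00 : P 0 0) (h01 : P 0 1) (h02 : P 0 2)
    (h10 : P 1 0) (h11 : P 1 1) (h12 : P 1 2)
    (h20 : P 2 0) (h21 : P 2 1) (h22 : P 2 2) : ∀ i j, P i j := by
  intro i j
  fin_cases i <;> fin_cases j
  exacts [h00, h01, h02, h10, h11, h12, h20, h21, h22]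

lemma key {N : ℕ} {π : Equiv.Perm (Fin (N+1))} (hmem : (⟨N+1, π⟩ : PermS) ∈ Av2)
    {a b : Fin (N+1)} (hab : a < b) :
    π.symm a < π.symm b ↔ π.symm a < π.symm (Fin.last N) := by
  constructor
  · intro h
    by_contra hc
    have halast : a ≠ Fin.last N := ne_of_lt (lt_of_lt_of_le hab (Fin.le_last b))
    have h1 : π.symm (Fin.last N) < π.symm a :=
      lt_of_le_of_ne (not_lt.1 hc) (fun he => halast (π.symm.injective he).symm)
    have hblast : b ≠ Fin.last N := by rintro rfl; exact hc h
    have q2 : b < Fin.last N := lt_of_le_of_ne (Fin.le_last b) hblast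
    have q1 : a < b := hab
    have q3 : a < Fin.last N := q1.trans q2
    obtain ⟨f, hf0, hf1, hf2⟩ := mk3 (π.symm (Fin.last N)) (π.symm a) (π.symm b) h1 h
    have e0 : π (f 0) = Fin.last N := by rw [hf0]; exact π.apply_symm_apply _
    have e1 : π (f 1) = a := by rw [hf1]; exact π.apply_symm_apply _
    have e2 : π (f 2) = b := by rw [hf2]; exact π.apply_symm_apply _
    refine hmem p312 (by simp) ⟨f, fin3_all ?_ ?_ ?_ ?_ ?_ ?_ ?_ ?_ ?_⟩
    · exact iff_of_false (by decide) (lt_irrefl _)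
    · exact iff_of_false (by decide) (by show ¬ π (f 0) < π (f 1); rw [e0, e1]; exact asymm q3)
    · exact iff_of_false (by decide) (by show ¬ π (f 0) < π (f 2); rw [e0, e2]; exact asymm q2)
    · exact iff_of_true (by decide) (by show π (f 1) < π (f 0); rw [e1, e0]; exact q3)
    · exact iff_of_false (by decide) (lt_irrefl _)
    · exact iff_of_true (by decide) (by show π (f 1) < π (f 2); rw [e1, e2]; exact q1)
    · exact iff_of_true (by decide) (by show π (f 2) < π (f 0); rw [e2, e0]; exact q2)
    · exact iff_of_false (by decide) (by show ¬ π (f 2) < π (f 1); rw [e2, e1]; exact asymm q1)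
    · exact iff_of_false (by decide) (lt_irrefl _)
  · intro h
    by_contra hc
    have hne : a ≠ b := ne_of_lt hab
    have h1 : π.symm b < π.symm a :=
      lt_of_le_of_ne (not_lt.1 hc) (fun he => hne (π.symm.injective he).symm)
    have hblast : b ≠ Fin.last N := by rintro rfl; exact hc h
    have q2 : b < Fin.last N := lt_of_le_of_ne (Fin.le_last b) hblast
    have q1 : a < b := hab
    have q3 : a < Fin.last N := q1.trans q2
    obtain ⟨f, hf0, hf1, hf2⟩ := mk3 (π.symm b) (π.symm a) (π.symm (Fin.last N)) h1 h
    have e0 : π (f 0) = b := by rw [hf0]; exact π.apply_symm_apply _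
    have e1 : π (f 1) = a := by rw [hf1]; exact π.apply_symm_apply _
    have e2 : π (f 2) = Fin.last N := by rw [hf2]; exact π.apply_symm_apply _
    refine hmem p213 (by simp) ⟨f, fin3_all ?_ ?_ ?_ ?_ ?_ ?_ ?_ ?_ ?_⟩
    · exact iff_of_false (by decide) (lt_irrefl _)
    · exact iff_of_false (by decide) (by show ¬ π (f 0) < π (f 1); rw [e0, e1]; exact asymm q1)
    · exact iff_of_true (by decide) (by show π (f 0) < π (f 2); rw [e0, e2]; exact q2)
    · exact iff_of_true (by decide) (by show π (f 1) < π (f 0); rw [e1, e0]; exact q1)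
    · exact iff_of_false (by decide) (lt_irrefl _)
    · exact iff_of_true (by decide) (by show π (f 1) < π (f 2); rw [e1, e2]; exact q3)
    · exact iff_of_false (by decide) (by show ¬ π (f 2) < π (f 0); rw [e2, e0]; exact asymm q2)
    · exact iff_of_false (by decide) (by show ¬ π (f 2) < π (f 1); rw [e2, e1]; exact asymm q3)
    · exact iff_of_false (by decide) (lt_irrefl _)

end Wedge15

namespace Wedge15
open List Finset Equiv

lemma funiq {N : ℕ} {f g : Fin N → Fin N} (hf : Function.Bijective f)
    (hg : Function.Bijective g) (h : ∀ a b, f a < f b ↔ g a < g b) : f = g := by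
  let ef : Fin N ≃ Fin N := Equiv.ofBijective f hf
  have hφ : StrictMono (fun x => g (ef.symm x)) := by
    intro x y hxy
    apply (h (ef.symm x) (ef.symm y)).1
    show ef (ef.symm x) < ef (ef.symm y)
    rwa [Equiv.apply_symm_apply, Equiv.apply_symm_apply]
  have hrange : Set.range (fun x => g (ef.symm x)) = Set.range (id : Fin N → Fin N) := by
    rw [Set.range_id]
    exact Set.range_eq_univ.2 (hg.2.comp ef.symm.surjective)
  have hwf : WellFoundedLT (Fin N) := inferInstance
  have hid : (fun x => g (ef.symm x)) = (id : Fin N → Fin N) :=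
    (hφ.range_inj (strictMono_id (α := Fin N))).1 hrange
  funext y
  have h1 : g (ef.symm (ef y)) = ef y := congrFun hid (ef y)
  rw [Equiv.symm_apply_apply] at h1
  exact h1.symm

lemma relLt {w : List Bool} {a b : Fin (w.length+1)} (h : a < b) :
    Rel w a b ↔ lw w a = false := by
  unfold Rel
  split_ifs with h1
  · exact iff_of_false (fun hx => lt_asymm h hx.2) (by simp [h1])
  · exact iff_of_true (Or.inr h) (by simpa using h1)

lemma relGt {w : List Bool} {a b : Fin (w.length+1)} (h : b < a) :
    Rel w a b ↔ lw w b = true := by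
  unfold Rel
  split_ifs with h1
  · exact ⟨fun hx => hx.1, fun hx => ⟨hx, h⟩⟩
  · exact ⟨fun hx => hx.resolve_right (lt_asymm h), Or.inl⟩

lemma perm_unique (w : List Bool) (π : Equiv.Perm (Fin (w.length+1)))
    (hmem : (⟨w.length+1, π⟩ : PermS) ∈ Av2)
    (hl : ∀ v : Fin (w.length+1), lw w v = decide (π.symm (Fin.last w.length) < π.symm v)) :
    permw w = π := by
  have hiff : ∀ a b : Fin (w.length+1), posn w a < posn w b ↔ π.symm a < π.symm b := by
    intro a b
    rcases eq_or_ne a b with rfl | hne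
    · simp
    rw [posn_iff hne]
    rcases hne.lt_or_gt with hab | hba
    · rw [relLt hab]
      have halast : a ≠ Fin.last w.length := ne_of_lt (lt_of_lt_of_le hab (Fin.le_last b))
      have hx : lw w a = false ↔ π.symm a < π.symm (Fin.last w.length) := by
        rw [hl a, decide_eq_false_iff_not]
        constructor
        · intro hn
          exact lt_of_le_of_ne (not_lt.1 hn) (fun he => halast (π.symm.injective he))
        · exact lt_asymm
      rw [hx, key hmem hab]
    · rw [relGt hba]
      have hblast : b ≠ Fin.last w.length := ne_of_lt (lt_of_lt_of_le hba (Fin.le_last a))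
      have h1 : lw w b = true ↔ π.symm (Fin.last w.length) < π.symm b := by
        rw [hl b]; exact decide_eq_true_iff
      rw [h1]
      have h2 := key hmem hba
      constructor
      · intro hx
        by_contra hc
        have hba' : π.symm b < π.symm a :=
          lt_of_le_of_ne (not_lt.1 hc) (fun he => (ne_of_lt hba) (π.symm.injective he))
        exact lt_asymm hx (h2.1 hba')
      · intro hx
        by_contra hc
        have hbl : π.symm b < π.symm (Fin.last w.length) :=
          lt_of_le_of_ne (not_lt.1 hc) (fun he => hblast (π.symm.injective he))
        exact lt_asymm hx (h2.2 hbl)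
  have hfun : posn w = ⇑π.symm :=
    funiq (Finite.injective_iff_bijective.1 (posn_inj w)) π.symm.bijective hiff
  have hsymm : (permw w).symm = π.symm := Equiv.ext (fun v => by rw [permw_symm, hfun])
  calc permw w = (permw w).symm.symm := (Equiv.symm_symm _).symm
    _ = π.symm.symm := by rw [hsymm]
    _ = π := Equiv.symm_symm _

def wordOf (N : ℕ) (π : Equiv.Perm (Fin (N+1))) : List Bool :=
  List.ofFn (fun i : Fin N => decide (π.symm (Fin.last N) < π.symm i.castSucc))

lemma wordOf_length (N : ℕ) (π : Equiv.Perm (Fin (N+1))) : (wordOf N π).length = N := by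
  simp [wordOf]

lemma lw_wordOf_lt (N : ℕ) (π : Equiv.Perm (Fin (N+1))) {k : ℕ} (hk : k < N) :
    lw (wordOf N π) k = decide (π.symm (Fin.last N) < π.symm ⟨k, Nat.lt_succ_of_lt hk⟩) := by
  rw [lw, List.getD_eq_getElem _ _ (by rw [wordOf_length]; exact hk)]
  simp only [wordOf, List.getElem_ofFn]
  congr 1

lemma lw_wordOf_ge (N : ℕ) (π : Equiv.Perm (Fin (N+1))) {k : ℕ} (hk : N ≤ k) :
    lw (wordOf N π) k = false := by
  rw [lw, List.getD_eq_default _ _ (by rw [wordOf_length]; exact hk)]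

lemma recover (u : List Bool) : wordOf u.length (permw u) = u := by
  apply List.ext_getElem (wordOf_length _ _)
  intro i h1 h2
  have hi : i < u.length := h2
  have hlt := lw_wordOf_lt u.length (permw u) hi
  rw [lw, List.getD_eq_getElem _ _ h1] at hlt
  rw [hlt, permw_symm, permw_symm]
  have hne : (Fin.last u.length) ≠ (⟨i, Nat.lt_succ_of_lt hi⟩ : Fin (u.length+1)) := by
    simp [Fin.ext_iff]; omega
  have hiff : posn u (Fin.last u.length) < posn u ⟨i, Nat.lt_succ_of_lt hi⟩ ↔ u[i] = true := by
    rw [posn_iff hne,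
      relGt (show (⟨i, Nat.lt_succ_of_lt hi⟩ : Fin (u.length+1)) < Fin.last u.length by
        simp [Fin.lt_def]; exact hi)]
    rw [lw]
    rw [List.getD_eq_getElem _ _ hi]
  rcases hb : u[i] with _ | _
  · rw [hb] at hiff
    simp only [Bool.false_eq_true, iff_false] at hiff
    exact decide_eq_false hiff
  · rw [hb] at hiff
    simp only [iff_true] at hiff
    exact decide_eq_true hiff

end Wedge15

namespace Wedge15
open List Finset Equiv

lemma contains_iff (u w : List Bool) :
    Contains ⟨u.length+1, permw u⟩ ⟨w.length+1, permw w⟩ ↔ u.Sublist w := by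
  constructor
  · intro hcont
    obtain ⟨f, hf⟩ : ∃ f : Fin (u.length+1) ↪o Fin (w.length+1),
        ∀ i j : Fin (u.length+1), permw u i < permw u j ↔ permw w (f i) < permw w (f j) := hcont
    set h' : Fin (u.length+1) → Fin (w.length+1) := fun v => permw w (f (posn u v)) with hh
    have hpos : ∀ v, posn w (h' v) = f (posn u v) := fun v => by
      rw [hh, ← permw_symm]; exact (permw w).symm_apply_apply _
    have happ : ∀ v, permw u (posn u v) = v := fun v => by
      rw [← permw_symm]; exact (permw u).apply_symm_apply v
    have hmono : StrictMono h' := by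
      intro a b hab
      have h1 : permw u (posn u a) < permw u (posn u b) := by rw [happ, happ]; exact hab
      exact (hf _ _).1 h1
    have hrel : ∀ a b, a ≠ b → (Rel u a b ↔ Rel w (h' a) (h' b)) := by
      intro a b hne
      rw [← posn_iff hne, ← posn_iff (fun he => hne (hmono.injective he)), hpos, hpos,
        OrderEmbedding.lt_iff_lt]
    have hlet : ∀ v : Fin (u.length+1), (v : ℕ) < u.length → lw w (h' v) = lw u v := by
      intro v hv
      have hvlast : v < Fin.last u.length := by rw [Fin.lt_def]; simpa using hv
      have hvne : v ≠ Fin.last u.length := ne_of_lt hvlast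
      rcases hlu : lw u (v : ℕ) with _ | _
      · rcases hlw : lw w ((h' v : Fin (w.length+1)) : ℕ) with _ | _
        · rfl
        · exfalso
          have h1 : Rel u v (Fin.last u.length) := by
            unfold Rel; rw [if_neg (by simp [hlu])]; exact Or.inr hvlast
          have h2 : Rel w (h' v) (h' (Fin.last u.length)) := (hrel _ _ hvne).1 h1
          exact lt_asymm (hmono hvlast) (lemB h2 hlw)
      · rcases hlw : lw w ((h' v : Fin (w.length+1)) : ℕ) with _ | _
        · exfalso
          have h2 : Rel w (h' v) (h' (Fin.last u.length)) := by
            unfold Rel; rw [if_neg (by simp [hlw])]; exact Or.inr (hmono hvlast)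
          have h1 : Rel u v (Fin.last u.length) := (hrel _ _ hvne).2 h2
          exact lt_asymm hvlast (lemB h1 hlu)
        · rfl
    rw [List.sublist_iff_exists_fin_orderEmbedding_get_eq]
    have hblt : ∀ i : Fin u.length, ((h' i.castSucc : Fin (w.length+1)) : ℕ) < w.length := by
      intro i
      have h1 : h' i.castSucc < h' (Fin.last u.length) := hmono (Fin.castSucc_lt_last i)
      have h3 : ((h' i.castSucc : Fin (w.length+1)) : ℕ)
          < ((h' (Fin.last u.length) : Fin (w.length+1)) : ℕ) := h1
      have h2 : ((h' (Fin.last u.length) : Fin (w.length+1)) : ℕ) ≤ w.length :=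
        Fin.is_le _
      omega
    refine ⟨OrderEmbedding.ofStrictMono (fun i => ⟨(h' i.castSucc : ℕ), hblt i⟩) ?_, ?_⟩
    · intro i j hij
      rw [Fin.mk_lt_mk]
      exact hmono (Fin.castSucc_lt_castSucc_iff.2 hij)
    · intro ix
      have hl := hlet ix.castSucc (by simpa using ix.isLt)
      show u.get ix = w.get ⟨(h' ix.castSucc : ℕ), hblt ix⟩
      rw [List.get_eq_getElem, List.get_eq_getElem]
      have e1 : lw u ((ix.castSucc : Fin (u.length+1)) : ℕ) = u[(ix : ℕ)] := by
        rw [lw, show ((ix.castSucc : Fin (u.length+1)) : ℕ) = (ix : ℕ) from rfl,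
          List.getD_eq_getElem _ _ ix.isLt]
      have e2 : lw w ((h' ix.castSucc : Fin (w.length+1)) : ℕ)
          = w[((h' ix.castSucc : Fin (w.length+1)) : ℕ)]'(hblt ix) := by
        rw [lw, List.getD_eq_getElem _ _ (hblt ix)]
      rw [← e1, ← e2]
      exact hl.symm
  · intro hsub
    obtain ⟨g, hg⟩ := List.sublist_iff_exists_fin_orderEmbedding_get_eq.1 hsub
    have H : ∃ g' : Fin (u.length+1) → Fin (w.length+1),
        StrictMono g' ∧ (∀ v : Fin (u.length+1), lw w (g' v) = lw u v) := by
      refine ⟨fun v => if hv : (v : ℕ) < u.length then (g ⟨v, hv⟩).castSucc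
        else Fin.last _, ?_, ?_⟩
      · intro a b hab
        have hab' : (a : ℕ) < (b : ℕ) := hab
        dsimp only
        by_cases h1 : (a : ℕ) < u.length
        · by_cases h2 : (b : ℕ) < u.length
          · rw [dif_pos h1, dif_pos h2]
            exact Fin.castSucc_lt_castSucc_iff.2 (g.strictMono (by rwa [Fin.mk_lt_mk]))
          · rw [dif_pos h1, dif_neg h2]
            exact Fin.castSucc_lt_last _
        · exfalso
          have := Fin.is_le b
          omega
      · intro v
        dsimp only
        by_cases hv : (v : ℕ) < u.length
        · rw [dif_pos hv, lw, lw,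
            show ((Fin.castSucc (g ⟨v, hv⟩) : Fin (w.length+1)) : ℕ) = ((g ⟨v, hv⟩ : Fin w.length) : ℕ) from rfl,
            List.getD_eq_getElem _ _ (g ⟨v, hv⟩).isLt, List.getD_eq_getElem _ _ hv]
          have := hg ⟨v, hv⟩
          rw [List.get_eq_getElem, List.get_eq_getElem] at this
          exact this.symm
        · have hv' : (v : ℕ) = u.length := le_antisymm (Fin.is_le v) (not_lt.1 hv)
          rw [dif_neg hv, lw, lw,
            show ((Fin.last w.length : Fin (w.length+1)) : ℕ) = w.length from rfl, hv',
            List.getD_eq_default _ _ (le_refl _), List.getD_eq_default _ _ (le_refl _)]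
    obtain ⟨g', hg'mono, hg'lw⟩ := H
    have hap : ∀ x, permw w (posn w x) = x := fun x => by
      rw [← permw_symm]; exact (permw w).apply_symm_apply x
    refine ⟨OrderEmbedding.ofStrictMono (fun p => posn w (g' (permw u p))) ?_, ?_⟩
    · intro p q hpq
      have hne : permw u p ≠ permw u q := fun he => (ne_of_lt hpq) ((permw u).injective he)
      apply (posn_iff (fun he => hne (hg'mono.injective he))).2
      apply (Rel_map hg'mono hg'lw _ _).1
      apply (posn_iff hne).1
      rw [← permw_symm, ← permw_symm, Equiv.symm_apply_apply, Equiv.symm_apply_apply]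
      exact hpq
    · intro i j
      show permw u i < permw u j ↔
        permw w (posn w (g' (permw u i))) < permw w (posn w (g' (permw u j)))
      rw [hap, hap]
      exact (hg'mono.lt_iff_lt).symm

end Wedge15

namespace Wedge15
open List Finset Equiv

lemma permCongr_triv {k : ℕ} (h : k = k) (π : Equiv.Perm (Fin k)) :
    (finCongr h).permCongr π = π := by
  ext x
  simp

lemma sigma_congr {k l : ℕ} (h : k = l) (β : Equiv.Perm (Fin (l+1))) :
    (⟨l+1, β⟩ : PermS) = ⟨k+1, (finCongr (by rw [h] : l + 1 = k + 1)).permCongr β⟩ := by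
  subst h
  rw [permCongr_triv]

lemma congr_symm_lt {k l : ℕ} (h : k = l) (π : Equiv.Perm (Fin k)) (x y : Fin l) :
    ((finCongr h).permCongr π).symm x < ((finCongr h).permCongr π).symm y ↔
      π.symm (Fin.cast h.symm x) < π.symm (Fin.cast h.symm y) := by
  subst h
  rw [permCongr_triv]
  simp

noncomputable def F (n : ℕ) (w : {w : List Bool // w.length = n}) :
    {p : PermS // p ∈ Av2 ∧ p.1 = n+1} :=
  ⟨⟨w.val.length + 1, permw w.val⟩, memAv2 w.val, by simp [w.prop]⟩

noncomputable def G (n : ℕ) (p : {p : PermS // p ∈ Av2 ∧ p.1 = n+1}) :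
    {w : List Bool // w.length = n} :=
  ⟨wordOf n ((finCongr p.prop.2).permCongr p.val.2), wordOf_length _ _⟩

lemma GF (n : ℕ) (w : {w : List Bool // w.length = n}) : G n (F n w) = w := by
  obtain ⟨u, hu⟩ := w
  subst hu
  apply Subtype.ext
  show wordOf u.length ((finCongr _).permCongr (permw u)) = u
  exact (congrArg (wordOf u.length) (permCongr_triv _ (permw u))).trans (recover u)

lemma FG (n : ℕ) (p : {p : PermS // p ∈ Av2 ∧ p.1 = n+1}) : F n (G n p) = p := by
  obtain ⟨⟨m, π⟩, hmem, hm⟩ := p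
  have hm' : m = n + 1 := hm
  subst hm'
  apply Subtype.ext
  show (⟨(wordOf n ((finCongr _).permCongr π)).length + 1,
      permw (wordOf n ((finCongr _).permCongr π))⟩ : PermS) = ⟨n+1, π⟩
  rw [permCongr_triv]
  have hL : (wordOf n π).length = n := wordOf_length n π
  rw [sigma_congr hL π]
  refine congrArg (Sigma.mk ((wordOf n π).length + 1)) (perm_unique _ _ ?_ ?_)
  · exact (sigma_congr hL π) ▸ hmem
  · intro v
    by_cases hv : (v : ℕ) < n
    · rw [lw_wordOf_lt n π hv]
      apply decide_eq_decide.mpr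
      rw [congr_symm_lt]
      have c1 : Fin.cast (by rw [hL] : n + 1 = (wordOf n π).length + 1).symm
          (Fin.last ((wordOf n π).length)) = Fin.last n := Fin.ext (by simp [hL])
      have c2 : Fin.cast (by rw [hL] : n + 1 = (wordOf n π).length + 1).symm v
          = (⟨(v : ℕ), Nat.lt_succ_of_lt hv⟩ : Fin (n+1)) := Fin.ext (by simp)
      rw [c1, c2]
    · have hle := Fin.is_le v
      have hvn : (v : ℕ) = n := by omega
      rw [lw_wordOf_ge n π (le_of_eq hvn.symm)]
      have hvl : v = Fin.last ((wordOf n π).length) := Fin.ext (by simp [hvn, hL])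
      rw [hvl]
      simp

noncomputable def eqv (n : ℕ) :
    {p : PermS // p ∈ Av2 ∧ p.1 = n+1} ≃ {w : List Bool // w.length = n} :=
  ⟨G n, F n, FG n, GF n⟩

end Wedge15


/-- Words over {L, R}: `false` is `L`, `true` is `R`. -/
theorem stmt15 :
    ∃ e : ∀ n : ℕ, {p : PermS // p ∈ Av2 ∧ p.1 = n + 1} ≃ {w : List Bool // w.length = n},
      ∀ (n m : ℕ) (p : {p : PermS // p ∈ Av2 ∧ p.1 = n + 1})
        (q : {q : PermS // q ∈ Av2 ∧ q.1 = m + 1}),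
        Contains p.val q.val ↔ ((e n p).val.Sublist ((e m q).val)) := by
  refine ⟨fun n => Wedge15.eqv n, ?_⟩
  intro n m p q
  have hp := congrArg Subtype.val (Wedge15.FG n p)
  have hq := congrArg Subtype.val (Wedge15.FG m q)
  rw [← hp, ← hq]
  exact Wedge15.contains_iff (Wedge15.G n p).val (Wedge15.G m q).val
end

section
/- For words over the alphabet {L, R}: for any two words α, β of the same length, there is a length-preserving bijection between the set of words that contain αL as a subsequence but no proper prefix of which contains αL, and the set of words that contain βR as a subsequence but no proper prefix of which contains βR. -/
/-- `w` contains `u` as a (scattered) subsequence but no proper prefix of `w` does. -/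
def MinContains (u w : List Bool) : Prop :=
  u.Sublist w ∧ ∀ p : List Bool, p <+: w → p ≠ w → ¬ u.Sublist p

namespace Stmt16Aux

/-- Decode a gap sequence into the corresponding minimal container of `α`. -/
def D : List Bool → List ℕ → List Bool
  | [], _ => []
  | _ :: _, [] => []
  | x :: α, k :: ks => List.replicate k (!x) ++ x :: D α ks

/-- Strip leading non-`x` letters, counting them, and drop the first `x`. -/
def stripF (x : Bool) : List Bool → ℕ × List Bool
  | [] => (0, [])
  | a :: w => if a = x then (0, w) else ((stripF x w).1 + 1, (stripF x w).2)

/-- Encode a word as a gap sequence relative to `α`. -/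
def E : List Bool → List Bool → List ℕ
  | [], _ => []
  | x :: α, w => (stripF x w).1 :: E α (stripF x w).2

lemma stripF_eq (x : Bool) (k : ℕ) (w : List Bool) :
    stripF x (List.replicate k (!x) ++ x :: w) = (k, w) := by
  induction k with
  | zero => simp [stripF]
  | succ n ih =>
    rw [List.replicate_succ, List.cons_append]
    simp only [stripF]
    rw [if_neg (by simp), ih]

lemma E_length (α w : List Bool) : (E α w).length = α.length := by
  induction α generalizing w with
  | nil => rfl
  | cons x α ih => simp [E, ih]

lemma E_D (α : List Bool) (ks : List ℕ) (h : ks.length = α.length) :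
    E α (D α ks) = ks := by
  induction α generalizing ks with
  | nil => simp at h; simp [h, E]
  | cons x α ih =>
    cases ks with
    | nil => simp at h
    | cons k ks =>
      simp only [D, E, stripF_eq]
      rw [ih ks (by simpa using h)]

lemma D_length (α : List Bool) (ks : List ℕ) (h : ks.length = α.length) :
    (D α ks).length = α.length + ks.sum := by
  induction α generalizing ks with
  | nil => simp at h; simp [h, D]
  | cons x α ih =>
    cases ks with
    | nil => simp at h
    | cons k ks =>
      simp only [D, List.length_append, List.length_replicate, List.length_cons,
        ih ks (by simpa using h), List.sum_cons, List.length_cons]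
      omega

lemma mc_nil (w : List Bool) : MinContains [] w ↔ w = [] := by
  constructor
  · rintro ⟨-, hp⟩
    by_contra hne
    exact hp [] (List.nil_prefix) (Ne.symm hne) (List.nil_sublist _)
  · rintro rfl
    refine ⟨List.Sublist.refl _, fun p hp hne _ => hne ?_⟩
    simpa using hp

lemma mc_cons_x (x : Bool) (α w : List Bool) (h : MinContains α w) :
    MinContains (x :: α) (x :: w) := by
  obtain ⟨hs, hp⟩ := h
  refine ⟨List.cons_sublist_cons.2 hs, ?_⟩
  intro p hpre hne hsub
  cases p with
  | nil => simp at hsub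
  | cons a q =>
    obtain ⟨rfl, hq⟩ : a = x ∧ q <+: w := by
      rcases hpre with ⟨t, ht⟩
      injection ht with h1 h2
      exact ⟨h1, ⟨t, h2⟩⟩
    have hqne : q ≠ w := fun hh => hne (by rw [hh])
    exact hp q hq hqne (List.cons_sublist_cons.1 hsub)

lemma sublist_of_cons_of_ne {x a : Bool} {l q : List Bool} (h : (x :: l).Sublist (a :: q))
    (hne : x ≠ a) : (x :: l).Sublist q := by
  cases h with
  | cons _ h' => exact h'
  | cons_cons => exact absurd rfl hne

lemma mc_cons_not (x : Bool) (α v : List Bool) (h : MinContains (x :: α) v) :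
    MinContains (x :: α) ((!x) :: v) := by
  obtain ⟨hs, hp⟩ := h
  refine ⟨hs.trans (List.sublist_cons_self _ _), ?_⟩
  intro p hpre hne hsub
  cases p with
  | nil => simp at hsub
  | cons a q =>
    obtain ⟨rfl, hq⟩ : a = !x ∧ q <+: v := by
      rcases hpre with ⟨t, ht⟩
      injection ht with h1 h2
      exact ⟨h1, ⟨t, h2⟩⟩
    have hqne : q ≠ v := fun hh => hne (by rw [hh])
    exact hp q hq hqne (sublist_of_cons_of_ne hsub (by simp))

lemma mc_build (x : Bool) (α w : List Bool) (k : ℕ) (h : MinContains α w) :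
    MinContains (x :: α) (List.replicate k (!x) ++ x :: w) := by
  induction k with
  | zero => simpa using mc_cons_x x α w h
  | succ n ih =>
    rw [List.replicate_succ, List.cons_append]
    exact mc_cons_not x α _ ih

lemma mc_cons_dest (x : Bool) (α w : List Bool) (h : MinContains (x :: α) w) :
    ∃ k w', w = List.replicate k (!x) ++ x :: w' ∧ MinContains α w' := by
  induction w with
  | nil => exact absurd h.1 (by simp)
  | cons a t ih =>
    obtain ⟨hs, hp⟩ := h
    by_cases hax : a = x
    · subst hax
      refine ⟨0, t, by simp, ?_, ?_⟩
      · cases hs with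
        | cons _ h' => exact (List.sublist_cons_self _ _).trans h'
        | cons_cons _ h' => exact h'
      · intro p hpre hne hsub
        exact hp (a :: p) (by exact List.cons_prefix_cons.2 ⟨rfl, hpre⟩)
          (fun hh => hne (by injection hh)) (List.cons_sublist_cons.2 hsub)
    · have hax' : a = !x := by cases a <;> cases x <;> simp_all
      subst hax'
      have ht : MinContains (x :: α) t := by
        refine ⟨?_, ?_⟩
        · exact sublist_of_cons_of_ne hs (by simp)
        · intro p hpre hne hsub
          exact hp ((!x) :: p) (List.cons_prefix_cons.2 ⟨rfl, hpre⟩)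
            (fun hh => hne (by injection hh)) (hsub.trans (List.sublist_cons_self _ _))
      obtain ⟨k, w', rfl, hw'⟩ := ih ht
      exact ⟨k + 1, w', by rw [List.replicate_succ, List.cons_append], hw'⟩

lemma mc_D (α : List Bool) (ks : List ℕ) (h : ks.length = α.length) :
    MinContains α (D α ks) := by
  induction α generalizing ks with
  | nil => exact (mc_nil _).2 rfl
  | cons x α ih =>
    cases ks with
    | nil => simp at h
    | cons k ks => exact mc_build x α _ k (ih ks (by simpa using h))

lemma mc_surj (α w : List Bool) (h : MinContains α w) :
    ∃ ks : List ℕ, ks.length = α.length ∧ w = D α ks := by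
  induction α generalizing w with
  | nil => exact ⟨[], rfl, (mc_nil w).1 h⟩
  | cons x α ih =>
    obtain ⟨k, w', rfl, hw'⟩ := mc_cons_dest x α w h
    obtain ⟨ks, hl, rfl⟩ := ih w' hw'
    exact ⟨k :: ks, by simp [hl], rfl⟩

lemma main (α β : List Bool) (h : α.length = β.length) :
    ∃ e : {w : List Bool // MinContains α w} ≃ {w : List Bool // MinContains β w},
      ∀ w, (e w).val.length = w.val.length := by
  refine ⟨⟨fun w => ⟨D β (E α w.1), mc_D β _ (by rw [E_length, h])⟩,
          fun w => ⟨D α (E β w.1), mc_D α _ (by rw [E_length, h])⟩, ?_, ?_⟩, ?_⟩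
  · rintro ⟨w, hw⟩
    obtain ⟨ks, hl, rfl⟩ := mc_surj α w hw
    apply Subtype.ext
    simp only
    rw [E_D α ks hl, E_D β ks (hl.trans h)]
  · rintro ⟨w, hw⟩
    obtain ⟨ks, hl, rfl⟩ := mc_surj β w hw
    apply Subtype.ext
    simp only
    rw [E_D β ks hl, E_D α ks (hl.trans h.symm)]
  · rintro ⟨w, hw⟩
    obtain ⟨ks, hl, rfl⟩ := mc_surj α w hw
    simp only [Equiv.coe_fn_mk]
    rw [E_D α ks hl, D_length β ks (hl.trans h), D_length α ks hl, h]

end Stmt16Aux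

/-- Words over {L, R}: `false` is `L`, `true` is `R`. -/
theorem stmt16 (α β : List Bool) (h : α.length = β.length) :
    ∃ e : {w : List Bool // MinContains (α ++ [false]) w} ≃
          {w : List Bool // MinContains (β ++ [true]) w},
      ∀ w, (e w).val.length = w.val.length :=
  Stmt16Aux.main (α ++ [false]) (β ++ [true]) (by simp [h])
end

section
/- For any two words α, β of the same length over {L, R} and any n, the number of words of length n containing α as a subsequence equals the number of words of length n containing β as a subsequence. -/
lemma finite_len_set (P : List Bool → Prop) (n : ℕ) :
    {w : List Bool | w.length = n ∧ P w}.Finite := by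
  apply Set.Finite.subset (Set.finite_range (fun f : Fin n → Bool => List.ofFn f))
  rintro w ⟨hw, -⟩
  subst hw
  exact ⟨w.get, List.ofFn_get w⟩

lemma sublist_of_cons_ne {a b : Bool} {l l' : List Bool}
    (h : (a::l).Sublist (b::l')) (hab : a ≠ b) : (a::l).Sublist l' := by
  cases h with
  | cons _ h => exact h
  | cons_cons _ h => exact absurd rfl hab

lemma cnt_cons (a : Bool) (α : List Bool) (n : ℕ) :
    {w : List Bool | w.length = n+1 ∧ (a::α).Sublist w}.ncard
      = {w : List Bool | w.length = n ∧ α.Sublist w}.ncard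
        + {w : List Bool | w.length = n ∧ (a::α).Sublist w}.ncard := by
  have hinj1 : Function.Injective (fun w : List Bool => a :: w) := by
    intro x y h; injection h
  have hinj2 : Function.Injective (fun w : List Bool => (!a) :: w) := by
    intro x y h; injection h
  have hA : {w : List Bool | w.length = n+1 ∧ (a::α).Sublist w}
      = (fun w => a :: w) '' {w : List Bool | w.length = n ∧ α.Sublist w}
        ∪ (fun w => (!a) :: w) '' {w : List Bool | w.length = n ∧ (a::α).Sublist w} := by
    ext w
    constructor
    · rintro ⟨hl, hs⟩
      match w with
      | c :: w' =>
        simp only [List.length_cons, Nat.add_right_cancel_iff] at hl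
        by_cases hc : c = a
        · subst hc
          exact Or.inl ⟨w', ⟨hl, (List.cons_sublist_cons).1 hs⟩, rfl⟩
        · have hc' : c = !a := by cases a <;> cases c <;> simp_all
          subst hc'
          exact Or.inr ⟨w', ⟨hl, sublist_of_cons_ne hs (by simp)⟩, rfl⟩
    · rintro (⟨w', ⟨hl, hs⟩, rfl⟩ | ⟨w', ⟨hl, hs⟩, rfl⟩)
      · exact ⟨by simp [hl], List.cons_sublist_cons.2 hs⟩
      · exact ⟨by simp [hl], hs.cons _⟩
  have hdisj : Disjoint ((fun w : List Bool => a :: w) '' {w : List Bool | w.length = n ∧ α.Sublist w})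
      ((fun w : List Bool => (!a) :: w) '' {w : List Bool | w.length = n ∧ (a::α).Sublist w}) := by
    rw [Set.disjoint_left]
    rintro x ⟨w1, -, rfl⟩ ⟨w2, -, h2⟩
    have : (!a) = a := by injection h2
    simp at this
  rw [hA, Set.ncard_union_eq hdisj ((finite_len_set _ n).image _) ((finite_len_set _ n).image _),
    Set.ncard_image_of_injective _ hinj1, Set.ncard_image_of_injective _ hinj2]

lemma cnt_zero (a : Bool) (α : List Bool) :
    {w : List Bool | w.length = 0 ∧ (a::α).Sublist w} = ∅ := by
  ext w
  simp only [Set.mem_setOf_eq, Set.mem_empty_iff_false, iff_false, not_and]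
  intro hw
  rw [List.length_eq_zero_iff] at hw
  subst hw
  simp

/-- Words over {L, R}: `Bool` is the two-letter alphabet. -/
theorem stmt17 (α β : List Bool) (h : α.length = β.length) (n : ℕ) :
    {w : List Bool | w.length = n ∧ α.Sublist w}.ncard
      = {w : List Bool | w.length = n ∧ β.Sublist w}.ncard := by
  induction α generalizing β n with
  | nil =>
    obtain rfl : β = [] := List.eq_nil_of_length_eq_zero h.symm
    rfl
  | cons a α ih =>
    cases β with
    | nil => simp at h
    | cons b β =>
      simp only [List.length_cons, Nat.add_right_cancel_iff] at h
      induction n with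
      | zero => rw [cnt_zero, cnt_zero]
      | succ n ihn => rw [cnt_cons, cnt_cons, ih β h n, ihn]
end

section
/- The class Av(213, 312) is uniquely-Wilf: for any two permutations π, σ in Av(213, 312) of the same size and any n, the number of size-n permutations in Av(213, 312) containing π equals the number containing σ. -/
namespace UWAux

lemma p213_lt (a b : Fin 3) :
    p213.2 a < p213.2 b ↔ (![1,0,2] : Fin 3 → Fin 3) a < ![1,0,2] b := Iff.rfl

lemma p312_lt (a b : Fin 3) :
    p312.2 a < p312.2 b ↔ (![2,0,1] : Fin 3 → Fin 3) a < ![2,0,1] b := Iff.rfl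

def Aval {N : ℕ} (q : Equiv.Perm (Fin N)) (v : Fin N) : Prop :=
  ∀ v', v < v' → q.symm v < q.symm v'

def Unimodal {N : ℕ} (q : Equiv.Perm (Fin N)) : Prop :=
  ∀ v : Fin N, Aval q v ∨ ∀ v', v < v' → q.symm v' < q.symm v

lemma unimodal_rule {N : ℕ} {q : Equiv.Perm (Fin N)} (hq : Unimodal q)
    {v v' : Fin N} (h : v < v') : q.symm v < q.symm v' ↔ Aval q v := by
  constructor
  · intro hlt
    rcases hq v with ha | hr
    · exact ha
    · exact absurd hlt (not_lt.2 (hr v' h).le)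
  · intro ha; exact ha v' h

lemma aval_last {N : ℕ} (q : Equiv.Perm (Fin (N+1))) : Aval q (Fin.last N) := by
  intro v' hv'; exact absurd hv' (not_lt.2 (Fin.le_last v'))


lemma emb3 {M : ℕ} {i j k : Fin M} (h1 : i < j) (h2 : j < k) :
    ∃ f : Fin 3 ↪o Fin M, f 0 = i ∧ f 1 = j ∧ f 2 = k := by
  have hsm : StrictMono (![i,j,k] : Fin 3 → Fin M) := by
    intro a b hab
    fin_cases a <;> fin_cases b <;>
      simp_all [Matrix.cons_val_zero, Matrix.cons_val_one] <;>
      first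
        | exact h1 | exact h2 | exact lt_trans h1 h2
        | exact absurd hab (by decide)
  exact ⟨OrderEmbedding.ofStrictMono _ hsm, rfl, rfl, rfl⟩

lemma mem_av2_iff {M : ℕ} (q : Equiv.Perm (Fin M)) :
    (⟨M, q⟩ : PermS) ∈ Av2 ↔ Unimodal q := by
  constructor
  · intro h
    have h213 : ¬ Contains p213 ⟨M, q⟩ := h p213 (by simp)
    have h312 : ¬ Contains p312 ⟨M, q⟩ := h p312 (by simp)
    intro v
    by_contra hv
    push_neg at hv
    obtain ⟨ha, hr⟩ := hv
    unfold Aval at ha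
    push_neg at ha
    obtain ⟨v1, hv1, hp1⟩ := ha
    obtain ⟨v2, hv2, hp2⟩ := hr
    have e1 : q.symm v1 < q.symm v :=
      lt_of_le_of_ne hp1 (fun e => absurd (q.symm.injective e) (ne_of_lt hv1).symm)
    have e2 : q.symm v < q.symm v2 :=
      lt_of_le_of_ne hp2 (fun e => absurd (q.symm.injective e) (ne_of_lt hv2))
    have hne : v1 ≠ v2 := fun e => absurd (e ▸ e1) (not_lt.2 (le_of_lt e2))
    have hv1n : (v:ℕ) < (v1:ℕ) := hv1
    have hv2n : (v:ℕ) < (v2:ℕ) := hv2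
    obtain ⟨f, hf0, hf1, hf2⟩ := emb3 e1 e2
    have hq0 : q (f 0) = v1 := by rw [hf0]; simp
    have hq1 : q (f 1) = v := by rw [hf1]; simp
    have hq2 : q (f 2) = v2 := by rw [hf2]; simp
    have hval : ∀ c : Fin 3, (⟨M, q⟩ : PermS).2 (f c) = ![v1, v, v2] c := by
      intro c; fin_cases c <;> simpa using ‹_›
    rcases lt_or_gt_of_ne hne with hlt | hgt
    · refine h213 ⟨f, ?_⟩
      suffices key : ∀ a b : Fin 3, p213.2 a < p213.2 b ↔
          (⟨M, q⟩ : PermS).2 (f a) < (⟨M, q⟩ : PermS).2 (f b) by exact key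
      intro a b
      rw [hval a, hval b, p213_lt a b]
      fin_cases a <;> fin_cases b <;> (constructor <;> intro h) <;>
        first
          | decide
          | exact hv1 | exact hv2 | exact hlt
          | exact absurd h (by decide)
          | exact absurd h (asymm hv1)
          | exact absurd h (asymm hv2)
          | exact absurd h (asymm hlt)
          | exact absurd h (lt_irrefl _)
    · refine h312 ⟨f, ?_⟩
      suffices key : ∀ a b : Fin 3, p312.2 a < p312.2 b ↔
          (⟨M, q⟩ : PermS).2 (f a) < (⟨M, q⟩ : PermS).2 (f b) by exact key
      intro a b
      rw [hval a, hval b, p312_lt a b]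
      fin_cases a <;> fin_cases b <;> (constructor <;> intro h) <;>
        first
          | decide
          | exact hv1 | exact hv2 | exact hgt
          | exact absurd h (by decide)
          | exact absurd h (asymm hv1)
          | exact absurd h (asymm hv2)
          | exact absurd h (asymm hgt)
          | exact absurd h (lt_irrefl _)
  · intro hq
    have key : ∀ f : Fin 3 ↪o Fin M, ¬ (q (f 1) < q (f 0) ∧ q (f 1) < q (f 2)) := by
      rintro f ⟨h10, h12⟩
      have f01 : f 0 < f 1 := f.strictMono (by decide)
      have f12 : f 1 < f 2 := f.strictMono (by decide)
      rcases hq (q (f 1)) with ha | hr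
      · have h2 := ha _ h10
        simp only [Equiv.symm_apply_apply] at h2
        exact absurd h2 (not_lt.2 f01.le)
      · have h2 := hr _ h12
        simp only [Equiv.symm_apply_apply] at h2
        exact absurd h2 (not_lt.2 f12.le)
    intro π hπ
    rintro ⟨f, hf⟩
    simp only [Set.mem_insert_iff, Set.mem_singleton_iff] at hπ
    rcases hπ with rfl | rfl
    · have hf3 : ∀ i j : Fin 3, p213.2 i < p213.2 j ↔ q (f i) < q (f j) := hf
      exact key f ⟨(hf3 1 0).1 (by decide), (hf3 1 2).1 (by decide)⟩
    · have hf3 : ∀ i j : Fin 3, p312.2 i < p312.2 j ↔ q (f i) < q (f j) := hf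
      exact key f ⟨(hf3 1 0).1 (by decide), (hf3 1 2).1 (by decide)⟩

open Finset

def LwB (w : List Bool) (v : ℕ) : Bool := if h : v < w.length then w[v] else true

def cnt (w : List Bool) (b : Bool) (v : ℕ) : ℕ :=
  ((Finset.range v).filter (fun a => LwB w a = b)).card

lemma cnt_le (w b v) : cnt w b v ≤ v := by
  simpa [cnt] using (Finset.card_filter_le (Finset.range v) _)

lemma cnt_add (w : List Bool) (v : ℕ) : cnt w true v + cnt w false v = v := by
  classical
  have h := Finset.card_filter_add_card_filter_not (s := Finset.range v)
    (p := fun a => LwB w a = true)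
  rw [Finset.card_range] at h
  have h2 : (Finset.range v).filter (fun a => ¬ LwB w a = true)
      = (Finset.range v).filter (fun a => LwB w a = false) := by
    apply Finset.filter_congr; intro x _; simp
  rw [h2] at h
  exact h

lemma cnt_lt (w : List Bool) {b : Bool} {v v' : ℕ} (h : v < v') (hb : LwB w v = b) :
    cnt w b v < cnt w b v' := by
  apply Finset.card_lt_card
  constructor
  · apply Finset.filter_subset_filter
    exact Finset.range_subset_range.2 h.le
  · intro hsub
    have : v ∈ (Finset.range v').filter (fun a => LwB w a = b) := by
      simp [Finset.mem_filter, h, hb]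
    have h2 := hsub this
    simp [Finset.mem_filter] at h2

def posN (w : List Bool) (v : ℕ) : ℕ :=
  if LwB w v then cnt w true v else w.length - cnt w false v

lemma posN_le (w : List Bool) (v : ℕ) (h : v ≤ w.length) : posN w v ≤ w.length := by
  unfold posN
  split
  · exact le_trans (cnt_le w true v) h
  · omega

lemma posN_lt_of (w : List Bool) {v v' : ℕ} (h : v < v') (h' : v' ≤ w.length)
    (hb : LwB w v = true) : posN w v < posN w v' := by
  have h1 := cnt_lt w h hb
  have h2 := cnt_add w v'
  unfold posN
  rw [hb, if_pos rfl]
  by_cases hb' : LwB w v' = true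
  · rw [if_pos hb']; exact h1
  · rw [if_neg hb']; omega

lemma posN_gt_of (w : List Bool) {v v' : ℕ} (h : v < v') (h' : v' ≤ w.length)
    (hb : LwB w v = false) : posN w v' < posN w v := by
  have h1 := cnt_lt w h hb
  have h2 := cnt_add w v'
  have h5 := cnt_le w false v'
  unfold posN
  rw [hb]
  simp only [Bool.false_eq_true, if_false]
  by_cases hb' : LwB w v' = true
  · rw [if_pos hb']; omega
  · rw [if_neg hb']; omega

def posE (w : List Bool) : Fin (w.length + 1) → Fin (w.length + 1) := fun v =>
  ⟨posN w v, by have := posN_le w v (Nat.lt_succ_iff.1 v.isLt); omega⟩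

lemma posE_lt_iff (w : List Bool) {v v' : Fin (w.length + 1)} (h : v < v') :
    (posE w v < posE w v' ↔ LwB w v = true) := by
  have hv' : (v' : ℕ) ≤ w.length := Nat.lt_succ_iff.1 v'.isLt
  constructor
  · intro hlt
    by_contra hb
    have hb' : LwB w v = false := by simpa using hb
    have := posN_gt_of w h hv' hb'
    simp only [posE, Fin.lt_def] at hlt
    omega
  · intro hb
    have := posN_lt_of w h hv' hb
    simp only [posE, Fin.lt_def]
    omega

lemma posE_inj (w : List Bool) : Function.Injective (posE w) := by
  intro a b hab
  by_contra hne
  rcases lt_or_gt_of_ne hne with h | h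
  · rcases hb : LwB w a with _ | _
    · have := posN_gt_of w h (Nat.lt_succ_iff.1 b.isLt) hb
      have : posE w b < posE w a := by simp only [posE, Fin.lt_def]; omega
      simp [hab] at this
    · have := (posE_lt_iff w h).2 hb
      simp [hab] at this
  · rcases hb : LwB w b with _ | _
    · have := posN_gt_of w h (Nat.lt_succ_iff.1 a.isLt) hb
      have : posE w a < posE w b := by simp only [posE, Fin.lt_def]; omega
      simp [hab] at this
    · have := (posE_lt_iff w h).2 hb
      simp [hab] at this

noncomputable def decode (w : List Bool) : Equiv.Perm (Fin (w.length + 1)) :=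
  (Equiv.ofBijective (posE w) ((Finite.injective_iff_bijective).1 (posE_inj w))).symm

lemma decode_symm_apply (w : List Bool) (v : Fin (w.length + 1)) :
    (decode w).symm v = posE w v := by
  simp [decode]

def encode {M : ℕ} (q : Equiv.Perm (Fin (M+1))) : List Bool :=
  List.ofFn fun v : Fin M => decide (q.symm v.castSucc < q.symm v.succ)

lemma encode_length {M : ℕ} (q : Equiv.Perm (Fin (M+1))) : (encode q).length = M := by
  simp [encode]

def Rule {M : ℕ} (q : Equiv.Perm (Fin (M+1))) (w : List Bool) : Prop :=
  ∀ v v' : Fin (M+1), v < v' → (q.symm v < q.symm v' ↔ LwB w (v:ℕ) = true)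

lemma unimodal_of_rule {M : ℕ} {q : Equiv.Perm (Fin (M+1))} {w : List Bool}
    (h : Rule q w) : Unimodal q := by
  intro v
  by_cases hb : LwB w (v:ℕ) = true
  · left; intro v' hv'; exact (h v v' hv').2 hb
  · right; intro v' hv'
    have h3 : ¬ q.symm v < q.symm v' := fun hc => hb ((h v v' hv').1 hc)
    have hne : q.symm v' ≠ q.symm v := fun e => (ne_of_lt hv').symm (q.symm.injective e)
    exact lt_of_le_of_ne (not_lt.1 h3) hne

lemma lwb_encode {M : ℕ} (q : Equiv.Perm (Fin (M+1))) (hq : Unimodal q) (v : Fin (M+1)) :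
    (LwB (encode q) (v:ℕ) = true) ↔ Aval q v := by
  by_cases hv : (v:ℕ) < M
  · have hlen : (v:ℕ) < (encode q).length := by rw [encode_length]; exact hv
    have h1 : LwB (encode q) (v:ℕ) = (encode q)[(v:ℕ)]'hlen := dif_pos hlen
    have hget : (encode q)[(v:ℕ)]'hlen
        = decide (q.symm (Fin.castSucc ⟨(v:ℕ), hv⟩) < q.symm (Fin.succ ⟨(v:ℕ), hv⟩)) := by
      simp [encode]
    have hcs : (Fin.castSucc ⟨(v:ℕ), hv⟩ : Fin (M+1)) = v := by apply Fin.ext; rfl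
    have hlt2 : v < Fin.succ ⟨(v:ℕ), hv⟩ := by
      rw [Fin.lt_def]; simp
    rw [h1, hget, hcs, decide_eq_true_iff]
    exact unimodal_rule hq hlt2
  · have h1 : LwB (encode q) (v:ℕ) = true := by
      unfold LwB
      rw [dif_neg (by rw [encode_length]; exact hv)]
    rw [h1]
    have hv' : v = Fin.last M := by
      apply Fin.ext
      have := v.isLt
      simp only [Fin.val_last]
      omega
    simp only [hv', true_iff]
    exact aval_last q

lemma rule_encode {M : ℕ} (q : Equiv.Perm (Fin (M+1))) (hq : Unimodal q) :
    Rule q (encode q) :=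
  fun v v' hvv' => (unimodal_rule hq hvv').trans (lwb_encode q hq v).symm

lemma rule_decode (w : List Bool) : Rule (decode w) w := by
  intro v v' h
  rw [decode_symm_apply, decode_symm_apply]
  exact posE_lt_iff w h

lemma unimodal_decode (w : List Bool) : Unimodal (decode w) := unimodal_of_rule (rule_decode w)

lemma perm_val_eq_card {N : ℕ} (e : Equiv.Perm (Fin N)) (v : Fin N) :
    ((e v : ℕ)) = (Finset.univ.filter fun u => e u < e v).card := by
  have himg : (Finset.univ.filter fun u => e u < e v).image e = Finset.Iio (e v) := by
    ext y
    simp only [Finset.mem_image, Finset.mem_filter, Finset.mem_univ, true_and, Finset.mem_Iio]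
    constructor
    · rintro ⟨u, hu, rfl⟩; exact hu
    · intro hy; exact ⟨e.symm y, by simpa using hy, by simp⟩
  have h2 := congrArg Finset.card himg
  rw [Finset.card_image_of_injective _ e.injective, Fin.card_Iio] at h2
  exact h2.symm

lemma lt_iff_not_lt_of_ne {α : Type*} [LinearOrder α] {a b : α} (h : a ≠ b) :
    a < b ↔ ¬ (b < a) :=
  ⟨fun hl hr => absurd hl (asymm hr), fun hr => lt_of_le_of_ne (not_lt.1 hr) h⟩

lemma perm_eq_of_rule {M : ℕ} {q q' : Equiv.Perm (Fin (M+1))} {w : List Bool}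
    (h : Rule q w) (h' : Rule q' w) : q = q' := by
  have key : ∀ v, q.symm v = q'.symm v := by
    intro v
    apply Fin.ext
    rw [perm_val_eq_card q.symm v, perm_val_eq_card q'.symm v]
    congr 1
    apply Finset.filter_congr
    intro u _
    rcases lt_trichotomy u v with hu | rfl | hu
    · rw [h u v hu, h' u v hu]
    · constructor <;> (intro hx; exact absurd hx (lt_irrefl _))
    · have hne : q.symm u ≠ q.symm v := fun e => (ne_of_lt hu).symm (q.symm.injective e)
      have hne' : q'.symm u ≠ q'.symm v := fun e => (ne_of_lt hu).symm (q'.symm.injective e)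
      rw [lt_iff_not_lt_of_ne hne, lt_iff_not_lt_of_ne hne', h v u hu, h' v u hu]
  have hsymm : q.symm = q'.symm := Equiv.ext key
  have := congrArg Equiv.symm hsymm
  simpa using this

lemma encode_eq_of_rule {M : ℕ} {q : Equiv.Perm (Fin (M+1))} {w : List Bool}
    (h : Rule q w) (hw : w.length = M) : encode q = w := by
  apply List.ext_getElem
  · rw [encode_length, hw]
  · intro i h1 h2
    have hiM : i < M := by rw [encode_length] at h1; exact h1
    have hget : (encode q)[i]'h1
        = decide (q.symm (Fin.castSucc ⟨i, hiM⟩) < q.symm (Fin.succ ⟨i, hiM⟩)) := by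
      simp [encode]
    rw [hget]
    have hlt : (Fin.castSucc ⟨i, hiM⟩ : Fin (M+1)) < Fin.succ ⟨i, hiM⟩ := Fin.castSucc_lt_succ
    have h3 := h _ _ hlt
    have h4 : LwB w ((Fin.castSucc ⟨i, hiM⟩ : Fin (M+1)) : ℕ) = w[i]'h2 := by
      show LwB w i = _
      unfold LwB
      rw [dif_pos h2]
    rw [h4] at h3
    cases hwi : w[i]'h2
    · simp only [hwi] at h3
      apply decide_eq_false
      intro hc
      exact absurd (h3.1 hc) (by simp)
    · simp only [hwi] at h3
      exact decide_eq_true (h3.2 (by simp))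

lemma contains_iff {K M : ℕ} (p : Equiv.Perm (Fin (K+1))) (q : Equiv.Perm (Fin (M+1)))
    (hp : Unimodal p) (hq : Unimodal q) :
    Contains ⟨K+1, p⟩ ⟨M+1, q⟩ ↔ List.Sublist (encode p) (encode q) := by
  constructor
  · rintro ⟨f, hf⟩
    set h : Fin (K+1) → Fin (M+1) := fun y => q (f (p.symm y)) with hh
    have hmono : StrictMono h := by
      intro y y' hyy'
      have := (hf (p.symm y) (p.symm y')).1 (by simpa using hyy')
      simpa [hh] using this
    have hsymm : ∀ y, q.symm (h y) = f (p.symm y) := by intro y; simp [hh]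
    rw [List.sublist_iff_exists_fin_orderEmbedding_get_eq]
    have hlb : ∀ ix : Fin (encode p).length,
        (h (Fin.castSucc (Fin.cast (encode_length p) ix)) : ℕ) < (encode q).length := by
      intro ix
      set v : Fin K := Fin.cast (encode_length p) ix
      have h2 : h v.castSucc < h v.succ := hmono (Fin.castSucc_lt_succ (i := v))
      have h3 := (h v.succ).isLt
      rw [encode_length]
      rw [Fin.lt_def] at h2
      omega
    set gfun : Fin (encode p).length → Fin (encode q).length := fun ix =>
      ⟨(h (Fin.castSucc (Fin.cast (encode_length p) ix)) : ℕ), hlb ix⟩ with hg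
    have gmono : StrictMono gfun := by
      intro a b hab
      have h1 : (Fin.cast (encode_length p) a) < (Fin.cast (encode_length p) b) := by
        rw [Fin.lt_def] at hab ⊢; exact hab
      have h2 := hmono (Fin.castSucc_lt_castSucc_iff.2 h1)
      rw [Fin.lt_def] at h2 ⊢
      exact h2
    refine ⟨OrderEmbedding.ofStrictMono gfun gmono, ?_⟩
    intro ix
    set v : Fin K := Fin.cast (encode_length p) ix with hv
    have e1 : (encode p).get ix
        = decide (p.symm v.castSucc < p.symm v.succ) := by
      simp [encode, List.get_ofFn, hv]
      exact List.get_ofFn _ ix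
    have hjval : (Fin.cast (encode_length q) (gfun ix) : Fin M)
        = ⟨(h v.castSucc : ℕ), by simpa [encode_length] using hlb ix⟩ := by
      apply Fin.ext; simp [hg, hv]
    have e2 : (encode q).get ((OrderEmbedding.ofStrictMono gfun gmono) ix)
        = decide (q.symm (Fin.castSucc (Fin.cast (encode_length q) (gfun ix)))
            < q.symm (Fin.succ (Fin.cast (encode_length q) (gfun ix)))) := by
      simp only [encode, List.get_ofFn]
      exact decide_eq_decide.2 Iff.rfl
    rw [e1, e2]
    apply Eq.symm
    apply decide_eq_decide.2
    set j : Fin M := Fin.cast (encode_length q) (gfun ix)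
    have hjcs : (Fin.castSucc j : Fin (M+1)) = h v.castSucc := by
      apply Fin.ext; simp [hjval, hg]
    calc q.symm j.castSucc < q.symm j.succ ↔ Aval q j.castSucc :=
          unimodal_rule hq (Fin.castSucc_lt_succ (i := j))
      _ ↔ Aval q (h v.castSucc) := by rw [hjcs]
      _ ↔ q.symm (h v.castSucc) < q.symm (h v.succ) :=
          (unimodal_rule hq (hmono (Fin.castSucc_lt_succ (i := v)))).symm
      _ ↔ f (p.symm v.castSucc) < f (p.symm v.succ) := by rw [hsymm, hsymm]
      _ ↔ p.symm v.castSucc < p.symm v.succ := f.lt_iff_lt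
  · intro hsub
    rw [List.sublist_iff_exists_fin_orderEmbedding_get_eq] at hsub
    obtain ⟨g, hg⟩ := hsub
    have glb : ∀ v : Fin K, (g (Fin.cast (encode_length p).symm v) : ℕ) < M := by
      intro v
      have h2 := (g (Fin.cast (encode_length p).symm v)).isLt
      have h3 : (encode q).length = M := encode_length q
      omega
    set gK : Fin K → Fin M := fun v => ⟨(g (Fin.cast (encode_length p).symm v) : ℕ), glb v⟩
      with hgK
    have gKmono : StrictMono gK := by
      intro a b hab
      have h1 : Fin.cast (encode_length p).symm a < Fin.cast (encode_length p).symm b := by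
        rw [Fin.lt_def] at hab ⊢; exact hab
      have h2 := g.strictMono h1
      rw [Fin.lt_def] at h2 ⊢
      exact h2
    set h : Fin (K+1) → Fin (M+1) := fun y =>
      if hy : (y:ℕ) < K then Fin.castSucc (gK ⟨(y:ℕ), hy⟩) else Fin.last M with hh
    have hmono : StrictMono h := by
      intro y y' hyy'
      rw [Fin.lt_def] at hyy'
      by_cases hy : (y:ℕ) < K
      · rw [hh]
        simp only
        rw [dif_pos hy]
        by_cases hy' : (y':ℕ) < K
        · rw [dif_pos hy']
          have h2 := gKmono (show (⟨(y:ℕ),hy⟩ : Fin K) < ⟨(y':ℕ),hy'⟩ from hyy')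
          rw [Fin.lt_def] at h2 ⊢
          simpa using h2
        · rw [dif_neg hy']
          rw [Fin.lt_def]
          simpa using (gK ⟨(y:ℕ),hy⟩).isLt
      · exfalso
        have h2 := y'.isLt
        omega
    have hletter : ∀ v : Fin K,
        (decide (p.symm v.castSucc < p.symm v.succ) : Bool)
          = decide (q.symm (gK v).castSucc < q.symm (gK v).succ) := by
      intro v
      have h1 := hg (Fin.cast (encode_length p).symm v)
      simp only [encode, List.get_ofFn] at h1
      exact h1
    have haval : ∀ y : Fin (K+1), Aval p y ↔ Aval q (h y) := by
      intro y
      by_cases hy : (y:ℕ) < K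
      · have hycs : (Fin.castSucc (⟨(y:ℕ), hy⟩ : Fin K)) = y := Fin.ext rfl
        have hyh : h y = Fin.castSucc (gK ⟨(y:ℕ), hy⟩) := by
          rw [hh]; simp only; rw [dif_pos hy]
        rw [hyh]
        conv_lhs => rw [← hycs]
        rw [← unimodal_rule hp (Fin.castSucc_lt_succ (i := (⟨(y:ℕ), hy⟩ : Fin K))),
          ← unimodal_rule hq (Fin.castSucc_lt_succ (i := gK ⟨(y:ℕ), hy⟩))]
        exact decide_eq_decide.1 (hletter ⟨(y:ℕ), hy⟩)
      · have hyl : y = Fin.last K := by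
          apply Fin.ext
          have h2 := y.isLt
          simp only [Fin.val_last]
          omega
        have hyh : h y = Fin.last M := by
          rw [hh]; simp only; rw [dif_neg hy]
        rw [hyh, hyl]
        exact iff_of_true (aval_last p) (aval_last q)
    set ffun : Fin (K+1) → Fin (M+1) := fun i => q.symm (h (p i)) with hfd
    have fmono : StrictMono ffun := by
      intro i j hij
      rcases lt_trichotomy (p i) (p j) with hpp | hpp | hpp
      · have hr := unimodal_rule hq (hmono hpp)
        have ha : Aval p (p i) := (unimodal_rule hp hpp).1 (by simpa using hij)
        exact hr.2 ((haval (p i)).1 ha)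
      · exact absurd (p.injective hpp) (ne_of_lt hij)
      · have hr := unimodal_rule hq (hmono hpp)
        have hna : ¬ Aval p (p j) := by
          intro ha
          have h2 := (unimodal_rule hp hpp).2 ha
          simp only [Equiv.symm_apply_apply] at h2
          exact absurd h2 (not_lt.2 hij.le)
        have hnlt : ¬ q.symm (h (p j)) < q.symm (h (p i)) :=
          fun hc => hna ((haval (p j)).2 (hr.1 hc))
        have hne2 : ffun i ≠ ffun j := by
          intro e
          have h2 := hmono.injective (q.symm.injective e)
          exact absurd (p.injective h2) (ne_of_lt hij)
        exact lt_of_le_of_ne (not_lt.1 hnlt) hne2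
    refine ⟨OrderEmbedding.ofStrictMono ffun fmono, ?_⟩
    intro i j
    have happ : ∀ i : Fin (K+1),
        (⟨M+1, q⟩ : PermS).2 ((OrderEmbedding.ofStrictMono ffun fmono) i)
          = h ((⟨K+1, p⟩ : PermS).2 i) := by
      intro i
      simp [hfd]
    rw [happ i, happ j]
    exact hmono.lt_iff_lt.symm

noncomputable def decodeS (w : List Bool) : PermS := ⟨w.length + 1, decode w⟩

lemma decodeS_mem (w : List Bool) : decodeS w ∈ Av2 := (mem_av2_iff _).2 (unimodal_decode w)

lemma decodeS_eq {M : ℕ} (q : Equiv.Perm (Fin (M+1))) (w : List Bool) (hw : w.length = M)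
    (h : Rule q w) : decodeS w = ⟨M+1, q⟩ := by
  subst hw
  have h2 := perm_eq_of_rule (rule_decode w) h
  simp [decodeS, h2]

lemma decodeS_inj : Function.Injective decodeS := by
  intro w w' he
  have h1 : w.length = w'.length := by
    have := congrArg Sigma.fst he
    simpa [decodeS] using this
  have h2 : HEq (decode w) (decode w') := (Sigma.ext_iff.1 he).2
  have hx : (⟨w.length, decode w⟩ : Σ m : ℕ, Equiv.Perm (Fin (m+1)))
      = ⟨w'.length, decode w'⟩ := Sigma.ext h1 h2
  have hF := congrArg (fun x : Σ m : ℕ, Equiv.Perm (Fin (m+1)) => encode x.2) hx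
  simp only at hF
  rw [encode_eq_of_rule (rule_decode w) rfl, encode_eq_of_rule (rule_decode w') rfl] at hF
  exact hF

def allLists : ℕ → Finset (List Bool)
  | 0 => {[]}
  | (m+1) => ((allLists m).image (false :: ·)) ∪ ((allLists m).image (true :: ·))

lemma mem_allLists (m : ℕ) (w : List Bool) : w ∈ allLists m ↔ w.length = m := by
  induction m generalizing w with
  | zero => simp [allLists, List.length_eq_zero_iff]
  | succ m ih =>
    simp only [allLists, Finset.mem_union, Finset.mem_image]
    constructor
    · rintro (⟨w', hw', rfl⟩ | ⟨w', hw', rfl⟩) <;> simp [(ih _).1 hw']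
    · intro hl
      cases w with
      | nil => simp at hl
      | cons b t =>
        have ht : t.length = m := by simpa using hl
        cases b
        · exact Or.inl ⟨t, (ih t).2 ht, rfl⟩
        · exact Or.inr ⟨t, (ih t).2 ht, rfl⟩

lemma cons_sublist_of_ne {a b : Bool} {u w : List Bool} (hab : a ≠ b) :
    List.Sublist (a :: u) (b :: w) ↔ List.Sublist (a :: u) w := by
  constructor
  · intro hsub
    cases hsub with
    | cons _ h => exact h
    | cons_cons => exact absurd rfl hab
  · intro hsub; exact hsub.cons _

lemma count_step (m : ℕ) (a : Bool) (u : List Bool) :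
    ((allLists (m+1)).filter (fun w => List.Sublist (a :: u) w)).card
      = ((allLists m).filter (fun w => List.Sublist u w)).card
        + ((allLists m).filter (fun w => List.Sublist (a :: u) w)).card := by
  classical
  show ((((allLists m).image (false :: ·)) ∪ ((allLists m).image (true :: ·))).filter _).card = _
  rw [Finset.filter_union, Finset.card_union_of_disjoint]
  · rw [Finset.filter_image, Finset.filter_image,
      Finset.card_image_of_injective _ (List.cons_injective),
      Finset.card_image_of_injective _ (List.cons_injective)]
    have hcf : ∀ b : Bool, ((allLists m).filter (fun w => List.Sublist (a :: u) (b :: w))).card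
        = if a = b then ((allLists m).filter (fun w => List.Sublist u w)).card
          else ((allLists m).filter (fun w => List.Sublist (a :: u) w)).card := by
      intro b
      by_cases hab : a = b
      · subst hab
        rw [if_pos rfl]
        congr 1
        apply Finset.filter_congr
        intro w _
        exact List.cons_sublist_cons
      · rw [if_neg hab]
        congr 1
        apply Finset.filter_congr
        intro w _
        exact cons_sublist_of_ne hab
    rw [hcf false, hcf true]
    cases a
    · simp
    · simp [Nat.add_comm]
  · rw [Finset.disjoint_left]
    intro x hx hx'
    simp only [Finset.mem_filter, Finset.mem_image] at hx hx'
    obtain ⟨⟨w1, _, rfl⟩, -⟩ := hx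
    obtain ⟨⟨w2, -, he⟩, -⟩ := hx'
    simp at he

lemma count_congr (m : ℕ) : ∀ u u' : List Bool, u.length = u'.length →
    ((allLists m).filter (fun w => List.Sublist u w)).card
      = ((allLists m).filter (fun w => List.Sublist u' w)).card := by
  induction m with
  | zero =>
    intro u u' hl
    cases u with
    | nil =>
      cases u' with
      | nil => rfl
      | cons a t => simp at hl
    | cons a t =>
      cases u' with
      | nil => simp at hl
      | cons a' t' =>
        have h1 : ∀ (c : Bool) (s : List Bool),
            ((allLists 0).filter (fun w => List.Sublist (c :: s) w)).card = 0 := by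
          intro c s
          rw [Finset.card_eq_zero]
          ext w
          simp only [Finset.mem_filter, Finset.notMem_empty, iff_false, not_and]
          intro hw
          rw [mem_allLists] at hw
          rw [List.length_eq_zero_iff] at hw
          subst hw
          intro hc
          simpa using List.Sublist.length_le hc
        rw [h1, h1]
  | succ m ih =>
    intro u u' hl
    cases u with
    | nil =>
      cases u' with
      | nil => rfl
      | cons a t => simp at hl
    | cons a t =>
      cases u' with
      | nil => simp at hl
      | cons a' t' =>
        rw [count_step m a t, count_step m a' t']
        have h1 : t.length = t'.length := by simpa using hl
        rw [ih t t' h1, ih (a :: t) (a' :: t') (by simpa using hl)]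


lemma bridge {K n' : ℕ} (p : Equiv.Perm (Fin (K+1))) (hp : Unimodal p) :
    {σ' : PermS | σ' ∈ Av2 ∧ σ'.1 = n' + 1 ∧ Contains ⟨K+1, p⟩ σ'}
      = decodeS '' {w : List Bool | w.length = n' ∧ List.Sublist (encode p) w} := by
  ext σ'
  simp only [Set.mem_setOf_eq, Set.mem_image]
  constructor
  · rintro ⟨hmem, hsz, hcont⟩
    obtain ⟨sz, q⟩ := σ'
    have hsz' : sz = n' + 1 := hsz
    subst hsz'
    have hq : Unimodal q := (mem_av2_iff q).1 hmem
    refine ⟨encode q, ⟨encode_length q, (contains_iff p q hp hq).1 hcont⟩, ?_⟩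
    exact decodeS_eq q (encode q) (encode_length q) (rule_encode q hq)
  · rintro ⟨w, ⟨hwl, hwsub⟩, rfl⟩
    refine ⟨decodeS_mem w, by simp [decodeS, hwl], ?_⟩
    exact (contains_iff p (decode w) hp (unimodal_decode w)).2
      (by rw [encode_eq_of_rule (rule_decode w) rfl]; exact hwsub)

lemma invCount_eq {K n' : ℕ} (p : Equiv.Perm (Fin (K+1))) (hp : Unimodal p) :
    invCount Av2 ⟨K+1, p⟩ (n'+1)
      = ((allLists n').filter (fun w => List.Sublist (encode p) w)).card := by
  show ({σ' : PermS | σ' ∈ Av2 ∧ σ'.1 = n' + 1 ∧ Contains ⟨K+1, p⟩ σ'}).ncard = _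
  rw [bridge p hp]
  rw [Set.ncard_image_of_injOn (decodeS_inj.injOn)]
  have hset : {w : List Bool | w.length = n' ∧ List.Sublist (encode p) w}
      = ↑((allLists n').filter (fun w => List.Sublist (encode p) w)) := by
    ext w
    simp [mem_allLists]
  rw [hset, Set.ncard_coe_finset]

end UWAux

theorem stmt18 (π σ : PermS) (hπ : π ∈ Av2) (hσ : σ ∈ Av2) (hsize : π.1 = σ.1) :
    ∀ n : ℕ, invCount Av2 π n = invCount Av2 σ n := by
  intro n
  obtain ⟨k, p⟩ := π
  obtain ⟨k2, q⟩ := σ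
  have hsz : k = k2 := hsize
  subst hsz
  cases k with
  | zero =>
    have hpq : p = q := Subsingleton.elim p q
    rw [hpq]
  | succ K =>
    have hp : UWAux.Unimodal p := (UWAux.mem_av2_iff p).1 hπ
    have hq : UWAux.Unimodal q := (UWAux.mem_av2_iff q).1 hσ
    cases n with
    | zero =>
      have hempty : ∀ r : Equiv.Perm (Fin (K+1)),
          {σ' : PermS | σ' ∈ Av2 ∧ σ'.1 = 0 ∧ Contains ⟨K+1, r⟩ σ'} = ∅ := by
        intro r
        ext σ'
        simp only [Set.mem_setOf_eq, Set.mem_empty_iff_false, iff_false, not_and]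
        intro _ hsz0
        rintro ⟨f, -⟩
        have h1 := (f 0).isLt
        omega
      show ({σ' : PermS | σ' ∈ Av2 ∧ σ'.1 = 0 ∧ Contains ⟨K+1, p⟩ σ'}).ncard
        = ({σ' : PermS | σ' ∈ Av2 ∧ σ'.1 = 0 ∧ Contains ⟨K+1, q⟩ σ'}).ncard
      rw [hempty p, hempty q]
    | succ n' =>
      rw [UWAux.invCount_eq p hp, UWAux.invCount_eq q hq]
      apply UWAux.count_congr
      rw [UWAux.encode_length, UWAux.encode_length]
end
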